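/- Let A be a k×k complex Hermitian matrix with spectral decomposition A = Σ_{j=1}^k λ_j u_j u_j*, where λ₁ > λ₂ ≥ ⋯ ≥ λ_k and the u_j are orthonormal complex unit vectors. Then M = u₁u₁* is the unique minimizer of ‖A − Z‖_F over CP^{k−1} = {Z ∈ ℂ^{k×k} : Z* = Z = Z², tr(Z) = 1}. -/

import Mathlib

open Matrix

/-- The Frobenius norm of a complex matrix. -/
noncomputable def frobC {k : ℕ} (A : Matrix (Fin k) (Fin k) ℂ) : ℝ :=
  Real.sqrt (((Aᴴ * A).trace).re)

lemma trace_vvZ {k : ℕ} (v w : Fin k → ℂ) (Z : Matrix (Fin k) (Fin k) ℂ) :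
    (vecMulVec v w * Z).trace = w ⬝ᵥ (Z *ᵥ v) := by
  simp only [Matrix.trace, Matrix.diag, Matrix.mul_apply, Matrix.vecMulVec_apply,
    dotProduct, Matrix.mulVec, Finset.mul_sum]
  rw [Finset.sum_comm]
  exact Finset.sum_congr rfl fun a _ => Finset.sum_congr rfl fun i _ => by ring

lemma c_normSq {k : ℕ} (Z : Matrix (Fin k) (Fin k) ℂ) (hZh : Zᴴ = Z) (hZi : Z * Z = Z)
    (v : Fin k → ℂ) :
    star v ⬝ᵥ (Z *ᵥ v) = ((∑ i, Complex.normSq ((Z *ᵥ v) i) : ℝ) : ℂ) := by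
  conv_lhs => rw [← hZi, ← Matrix.mulVec_mulVec, Matrix.dotProduct_mulVec]
  have h : star v ᵥ* Z = star (Z *ᵥ v) := by rw [Matrix.star_mulVec, hZh]
  rw [h]
  simp only [dotProduct, Pi.star_apply]
  push_cast
  exact Finset.sum_congr rfl fun i _ => by
    rw [← Complex.mul_conj, mul_comm]; rfl

lemma sum_c_eq_trace {k : ℕ} (u : Fin k → Fin k → ℂ)
    (horth : ∀ i j : Fin k, star (u i) ⬝ᵥ u j = if i = j then 1 else 0)
    (Z : Matrix (Fin k) (Fin k) ℂ) :
    ∑ j, star (u j) ⬝ᵥ (Z *ᵥ u j) = Z.trace := by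
  set U : Matrix (Fin k) (Fin k) ℂ := Matrix.of fun i j => u j i with hU
  have hUU : Uᴴ * U = 1 := by
    ext i j
    simp only [Matrix.mul_apply, Matrix.conjTranspose_apply, hU, Matrix.of_apply,
      Matrix.one_apply]
    rw [← horth i j]
    simp [dotProduct]
  have hUU2 : U * Uᴴ = 1 := mul_eq_one_comm.mp hUU
  have key : ∑ j, star (u j) ⬝ᵥ (Z *ᵥ u j) = (Uᴴ * Z * U).trace := by
    simp only [Matrix.trace, Matrix.diag, Matrix.mul_apply, Matrix.conjTranspose_apply,
      hU, Matrix.of_apply, dotProduct, Matrix.mulVec, Pi.star_apply, Finset.sum_mul,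
      Finset.mul_sum]
    refine Finset.sum_congr rfl fun j _ => ?_
    rw [Finset.sum_comm]
    exact Finset.sum_congr rfl fun a _ =>
      Finset.sum_congr rfl fun b _ => by ring
  rw [key, Matrix.trace_mul_comm, ← Matrix.mul_assoc, Matrix.mul_assoc U Uᴴ Z, ← Matrix.mul_assoc, hUU2, Matrix.one_mul]

lemma mulVec_cancel {k : ℕ} (u : Fin k → Fin k → ℂ)
    (horth : ∀ i j : Fin k, star (u i) ⬝ᵥ u j = if i = j then 1 else 0)
    (Z M : Matrix (Fin k) (Fin k) ℂ) (h : ∀ j, Z *ᵥ u j = M *ᵥ u j) : Z = M := by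
  set U : Matrix (Fin k) (Fin k) ℂ := Matrix.of fun i j => u j i with hU
  have hUU : Uᴴ * U = 1 := by
    ext i j
    simp only [Matrix.mul_apply, Matrix.conjTranspose_apply, hU, Matrix.of_apply,
      Matrix.one_apply]
    rw [← horth i j]
    simp [dotProduct]
  have hUU2 : U * Uᴴ = 1 := mul_eq_one_comm.mp hUU
  have hZU : Z * U = M * U := by
    ext i j
    have := congrFun (h j) i
    simpa [Matrix.mul_apply, hU, Matrix.mulVec, dotProduct] using this
  calc Z = Z * (U * Uᴴ) := by rw [hUU2, Matrix.mul_one]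
    _ = (Z * U) * Uᴴ := by rw [Matrix.mul_assoc]
    _ = (M * U) * Uᴴ := by rw [hZU]
    _ = M := by rw [Matrix.mul_assoc, hUU2, Matrix.mul_one]

lemma trace_sq_nonneg {k : ℕ} (B : Matrix (Fin k) (Fin k) ℂ) : 0 ≤ ((Bᴴ * B).trace).re := by
  simp only [Matrix.trace, Matrix.diag, Matrix.mul_apply, Matrix.conjTranspose_apply,
    Complex.re_sum]
  refine Finset.sum_nonneg fun j _ => Finset.sum_nonneg fun i _ => ?_
  have : star (B i j) * B i j = (Complex.normSq (B i j) : ℂ) := by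
    rw [← Complex.mul_conj, mul_comm]; rfl
  rw [this]
  simp [Complex.normSq_nonneg]

lemma expand_trace {k : ℕ} (A Z : Matrix (Fin k) (Fin k) ℂ) (hAh : Aᴴ = A) (hZh : Zᴴ = Z)
    (hZi : Z * Z = Z) (hZt : Z.trace = 1) :
    (((A - Z)ᴴ * (A - Z)).trace).re = ((Aᴴ * A).trace).re + 1 - 2 * ((A * Z).trace).re := by
  have h1 : (A - Z)ᴴ * (A - Z) = Aᴴ * A - A * Z - Z * A + Z := by
    rw [conjTranspose_sub, hZh, sub_mul, mul_sub, mul_sub, hZi]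
    rw [hAh]
    abel
  rw [h1, trace_add, trace_sub, trace_sub, trace_mul_comm Z A, hZt]
  simp only [Complex.add_re, Complex.sub_re, Complex.one_re]
  rw [hAh]
  ring


/-- Let A = Σ_{j=1}^k λ_j u_j u_j* be Hermitian with
λ₁ > λ₂ ≥ ⋯ ≥ λ_k and u_j orthonormal. Then M = u₁u₁* is the unique minimizer of
‖A − Z‖_F over CP^{k−1} = {Z : Z* = Z = Z², tr(Z) = 1}. -/
theorem complex_projective_projection_unique (k : ℕ) (hk : 1 < k)
    (lam : Fin k → ℝ) (u : Fin k → Fin k → ℂ)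
    (horth : ∀ i j : Fin k, star (u i) ⬝ᵥ u j = if i = j then 1 else 0)
    (hdec : ∀ i j : Fin k, i ≤ j → lam j ≤ lam i)
    (hgap : lam ⟨1, hk⟩ < lam ⟨0, Nat.lt_of_lt_of_le Nat.one_pos hk.le⟩)
    (A : Matrix (Fin k) (Fin k) ℂ)
    (hA : A = ∑ j : Fin k, (lam j : ℂ) • vecMulVec (u j) (star (u j)))
    (M : Matrix (Fin k) (Fin k) ℂ)
    (hM : M = vecMulVec (u ⟨0, Nat.lt_of_lt_of_le Nat.one_pos hk.le⟩)
      (star (u ⟨0, Nat.lt_of_lt_of_le Nat.one_pos hk.le⟩))) :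
    (Mᴴ = M ∧ M * M = M ∧ M.trace = 1) ∧
      ∀ Z : Matrix (Fin k) (Fin k) ℂ, (Zᴴ = Z ∧ Z * Z = Z ∧ Z.trace = 1) →
        frobC (A - M) ≤ frobC (A - Z) ∧ (frobC (A - Z) = frobC (A - M) → Z = M) := by
  set z0 : Fin k := ⟨0, Nat.lt_of_lt_of_le Nat.one_pos hk.le⟩ with hz0
  set z1 : Fin k := ⟨1, hk⟩ with hz1
  set u0 : Fin k → ℂ := u z0 with hu0
  -- basic facts about the u's
  have h00 : star u0 ⬝ᵥ u0 = 1 := by rw [hu0, horth]; simp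
  -- conjTranspose of vecMulVec v (star v)
  have hvv : ∀ v : Fin k → ℂ, (vecMulVec v (star v))ᴴ = vecMulVec v (star v) := by
    intro v; ext i j
    simp only [Matrix.conjTranspose_apply, Matrix.vecMulVec_apply, Pi.star_apply, star_mul',
      star_star]
    ring
  -- M is Hermitian
  have hMh : Mᴴ = M := by rw [hM]; exact hvv _
  -- M is idempotent
  have hMM : M * M = M := by
    rw [hM]; ext i j
    simp only [Matrix.mul_apply, Matrix.vecMulVec_apply, Pi.star_apply]
    have : ∀ a : Fin k, u0 i * star (u0 a) * (u0 a * star (u0 j))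
        = (u0 i * star (u0 j)) * (star (u0 a) * u0 a) := fun a => by ring
    rw [Finset.sum_congr rfl fun a _ => this a, ← Finset.mul_sum]
    have : ∑ a, star (u0 a) * u0 a = 1 := by
      have := h00; simpa [dotProduct] using this
    rw [this, mul_one]
  -- M has trace 1
  have hMt : M.trace = 1 := by
    rw [hM]
    simp only [Matrix.trace, Matrix.diag, Matrix.vecMulVec_apply, Pi.star_apply]
    have : ∑ i, u0 i * star (u0 i) = ∑ i, star (u0 i) * u0 i := by
      exact Finset.sum_congr rfl fun i _ => mul_comm _ _
    rw [this]
    simpa [dotProduct] using h00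
  -- A is Hermitian
  have hAh : Aᴴ = A := by
    rw [hA, Matrix.conjTranspose_sum]
    refine Finset.sum_congr rfl fun j _ => ?_
    rw [Matrix.conjTranspose_smul, hvv]
    congr 1
    simp [Complex.star_def, Complex.conj_ofReal]
  -- trace(A*Z) in terms of the c's
  have htrAZ : ∀ Z : Matrix (Fin k) (Fin k) ℂ,
      (A * Z).trace = ∑ j, (lam j : ℂ) * (star (u j) ⬝ᵥ (Z *ᵥ u j)) := by
    intro Z
    rw [hA, Matrix.sum_mul, Matrix.trace_sum]
    refine Finset.sum_congr rfl fun j _ => ?_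
    rw [Matrix.smul_mul, Matrix.trace_smul, trace_vvZ]
    simp [smul_eq_mul]
  -- value of c for M
  have hcM : ∀ j, star (u j) ⬝ᵥ (M *ᵥ u j) = if j = z0 then 1 else 0 := by
    intro j
    have hMv : M *ᵥ u j = fun i => u0 i * (star u0 ⬝ᵥ u j) := by
      funext i
      simp only [hM, Matrix.mulVec, dotProduct, Matrix.vecMulVec_apply, Pi.star_apply,
        Finset.mul_sum]
      exact Finset.sum_congr rfl fun a _ => by ring
    rw [hMv]
    have : star (u j) ⬝ᵥ (fun i => u0 i * (star u0 ⬝ᵥ u j))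
        = (star (u j) ⬝ᵥ u0) * (star u0 ⬝ᵥ u j) := by
      simp only [dotProduct, Finset.sum_mul]
      exact Finset.sum_congr rfl fun i _ => by ring
    rw [this, hu0, hz0, horth, horth]
    by_cases hj : j = z0
    · simp [hj, hz0]
    · have hj' : ¬((⟨0, Nat.lt_of_lt_of_le Nat.one_pos hk.le⟩ : Fin k) = j) := fun h => hj h.symm
      simp [hj, hj', hz0]
      exact hj
  refine ⟨⟨hMh, hMM, hMt⟩, ?_⟩
  rintro Z ⟨hZh, hZi, hZt⟩
  -- the diagonal coefficients of Z in the u basis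
  set c : Fin k → ℂ := fun j => star (u j) ⬝ᵥ (Z *ᵥ u j) with hc
  have hcreal : ∀ j, c j = ((∑ i, Complex.normSq ((Z *ᵥ u j) i) : ℝ) : ℂ) :=
    fun j => c_normSq Z hZh hZi (u j)
  have hcnn : ∀ j, 0 ≤ (c j).re := by
    intro j; rw [hcreal j]
    simp only [Complex.ofReal_re]
    exact Finset.sum_nonneg fun i _ => Complex.normSq_nonneg _
  have hcsum : ∑ j, (c j).re = 1 := by
    have := sum_c_eq_trace u horth Z
    rw [hZt] at this
    have := congrArg Complex.re this
    simpa [Complex.re_sum] using this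
  -- g Z ≤ lam z0
  have hgZre : ((A * Z).trace).re = ∑ j, lam j * (c j).re := by
    rw [htrAZ Z, Complex.re_sum]
    exact Finset.sum_congr rfl fun j _ => Complex.re_ofReal_mul _ _
  have hgZ_le : ∑ j, lam j * (c j).re ≤ lam z0 := by
    calc ∑ j, lam j * (c j).re ≤ ∑ j, lam z0 * (c j).re := by
          refine Finset.sum_le_sum fun j _ => mul_le_mul_of_nonneg_right ?_ (hcnn j)
          exact hdec z0 j (by simp [hz0, Fin.le_def])
      _ = lam z0 := by rw [← Finset.mul_sum, hcsum, mul_one]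
  -- g M = lam z0
  have hgM : ((A * M).trace).re = lam z0 := by
    rw [htrAZ M, Complex.re_sum]
    have : ∀ j, ((lam j : ℂ) * (star (u j) ⬝ᵥ (M *ᵥ u j))).re
        = if j = z0 then lam j else 0 := by
      intro j; rw [hcM j]
      by_cases hj : j = z0 <;> simp [hj]
    rw [Finset.sum_congr rfl fun j _ => this j]
    simp
  -- key trace quantities
  have hexpZ := expand_trace A Z hAh hZh hZi hZt
  have hexpM := expand_trace A M hAh hMh hMM hMt
  have hnnZ := trace_sq_nonneg (A - Z)
  have hnnM := trace_sq_nonneg (A - M)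
  have htle : (((A - M)ᴴ * (A - M)).trace).re ≤ (((A - Z)ᴴ * (A - Z)).trace).re := by
    rw [hexpZ, hexpM, hgM, hgZre]; linarith
  constructor
  · exact Real.sqrt_le_sqrt htle
  · intro heq
    -- equality of traces
    have hteq : (((A - Z)ᴴ * (A - Z)).trace).re = (((A - M)ᴴ * (A - M)).trace).re :=
      (Real.sqrt_inj hnnZ hnnM).mp heq
    have hgeq : ∑ j, lam j * (c j).re = lam z0 := by
      rw [hexpZ, hexpM, hgM, hgZre] at hteq; linarith
    -- each deficiency term vanishes
    have hzero : ∀ j, (lam z0 - lam j) * (c j).re = 0 := by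
      have hsum0 : ∑ j, (lam z0 - lam j) * (c j).re = 0 := by
        have : ∑ j, (lam z0 - lam j) * (c j).re
            = lam z0 * (∑ j, (c j).re) - ∑ j, lam j * (c j).re := by
          rw [Finset.mul_sum, ← Finset.sum_sub_distrib]
          exact Finset.sum_congr rfl fun j _ => by ring
        rw [this, hcsum, hgeq]; ring
      have hnn : ∀ j ∈ Finset.univ, 0 ≤ (lam z0 - lam j) * (c j).re := by
        intro j _
        refine mul_nonneg ?_ (hcnn j)
        have := hdec z0 j (by simp [hz0, Fin.le_def])
        linarith
      intro j
      exact (Finset.sum_eq_zero_iff_of_nonneg hnn).mp hsum0 j (Finset.mem_univ j)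
    -- Z kills u j for j ≠ z0
    have hZkill : ∀ j, j ≠ z0 → Z *ᵥ u j = 0 := by
      intro j hj
      have h1j : z1 ≤ j := by
        rw [hz1, Fin.le_def]
        rcases Nat.eq_zero_or_pos j.val with h | h
        · exact absurd (Fin.ext h) hj
        · exact h
      have hlam : 0 < lam z0 - lam j := by
        have := hdec z1 j h1j; linarith
      have hcj : (c j).re = 0 := by
        have := hzero j
        rcases mul_eq_zero.mp this with h | h
        · linarith
        · exact h
      have hns : ∑ i, Complex.normSq ((Z *ᵥ u j) i) = 0 := by
        have := hcreal j
        have h2 := congrArg Complex.re this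
        simpa [hcj] using h2.symm
      funext i
      have := (Finset.sum_eq_zero_iff_of_nonneg
        (fun i _ => Complex.normSq_nonneg ((Z *ᵥ u j) i))).mp hns i (Finset.mem_univ i)
      exact Complex.normSq_eq_zero.mp this
    -- Z fixes u0
    have hc0 : c z0 = 1 := by
      have hre : (c z0).re = 1 := by
        have : ∑ j, (c j).re = (c z0).re + ∑ j ∈ Finset.univ.erase z0, (c j).re :=
          (Finset.add_sum_erase _ _ (Finset.mem_univ z0)).symm
        rw [this] at hcsum
        have : ∑ j ∈ Finset.univ.erase z0, (c j).re = 0 := by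
          refine Finset.sum_eq_zero fun j hj => ?_
          have hjne : j ≠ z0 := (Finset.mem_erase.mp hj).1
          rw [hc]
          simp [hZkill j hjne]
        linarith
      rw [hcreal z0] at hre ⊢
      simp only [Complex.ofReal_re] at hre
      rw [hre]; norm_num
    have hZfix : Z *ᵥ u0 = u0 := by
      set W : Matrix (Fin k) (Fin k) ℂ := 1 - Z with hW
      have hWh : Wᴴ = W := by rw [hW, conjTranspose_sub, conjTranspose_one, hZh]
      have hWi : W * W = W := by
        rw [hW, sub_mul, mul_sub, mul_sub, hZi]
        simp only [Matrix.one_mul, Matrix.mul_one]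
        abel
      have hWv : W *ᵥ u0 = u0 - Z *ᵥ u0 := by rw [hW, sub_mulVec, one_mulVec]
      have hcW : star u0 ⬝ᵥ (W *ᵥ u0) = 0 := by
        rw [hWv, dotProduct_sub, h00]
        rw [hu0, hz0]
        rw [← hz0, ← hu0]
        have : star u0 ⬝ᵥ (Z *ᵥ u0) = c z0 := rfl
        rw [this, hc0]; ring
      have := c_normSq W hWh hWi u0
      rw [hcW] at this
      have hns : ∑ i, Complex.normSq ((W *ᵥ u0) i) = 0 := by
        exact_mod_cast this.symm
      have hW0 : W *ᵥ u0 = 0 := by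
        funext i
        have := (Finset.sum_eq_zero_iff_of_nonneg
          (fun i _ => Complex.normSq_nonneg ((W *ᵥ u0) i))).mp hns i (Finset.mem_univ i)
        exact Complex.normSq_eq_zero.mp this
      rw [hWv] at hW0
      have := sub_eq_zero.mp hW0
      exact this.symm
    -- conclude Z = M
    refine mulVec_cancel u horth Z M fun j => ?_
    have hMv : M *ᵥ u j = fun i => u0 i * (star u0 ⬝ᵥ u j) := by
      funext i
      simp only [hM, Matrix.mulVec, dotProduct, Matrix.vecMulVec_apply, Pi.star_apply,
        Finset.mul_sum]
      exact Finset.sum_congr rfl fun a _ => by ring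
    by_cases hj : j = z0
    · subst hj
      rw [hZfix, hMv, hu0, hz0, horth]
      simp
    · rw [hZkill j hj, hMv]
      have hj' : ¬((z0 : Fin k) = j) := fun h => hj h.symm
      have h0j : star (u z0) ⬝ᵥ u j = if z0 = j then 1 else 0 := horth z0 j
      funext i
      show (0:ℂ) = u0 i * (star u0 ⬝ᵥ u j)
      rw [hu0, h0j, if_neg hj', mul_zero]
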